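/- arXiv:1103.0409 — 2 statements merged into one kernel-verified Lean document; each statement's English description precedes it below -/
import Mathlib

section
/- Let f ∈ L²(ℝ) and g ∈ 𝒮(ℝ). Then the short-time Fourier transform V(f,g)(x,ω) = ∫ f(t) conj(g(t-x)) e^{-2πiωt} dt is partially differentiable with respect to x at every point, with ∂ₓ V(f,g)(x,ω) = V(f, -g')(x,ω). -/
open MeasureTheory Complex

lemma schwartz_decay2 (g : SchwartzMap ℝ ℂ) :
    ∃ C : ℝ, 0 ≤ C ∧ ∀ s : ℝ, ‖g s‖ ≤ C * ((1 + ‖s‖) ^ 2)⁻¹ := by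
  refine ⟨2 ^ 2 * (Finset.Iic ((2:ℕ),(0:ℕ))).sup (fun m => SchwartzMap.seminorm ℝ m.1 m.2) g,
    by positivity, fun s => ?_⟩
  have h := SchwartzMap.one_add_le_sup_seminorm_apply (𝕜 := ℝ) (m := (2,0)) (k := 2) (n := 0)
    le_rfl le_rfl g s
  rw [norm_iteratedFDeriv_zero] at h
  have hpos : (0:ℝ) < (1 + ‖s‖) ^ 2 := by positivity
  rw [mul_comm, ← le_div_iff₀ hpos] at h
  simpa [div_eq_mul_inv] using h

lemma pow_neg_four_eq (t : ℝ) : (1 + ‖t‖) ^ (-(4:ℝ)) = (((1 + ‖t‖) ^ 2)⁻¹) ^ 2 := by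
  rw [← Real.rpow_natCast ((1 + ‖t‖) ^ 2)⁻¹ 2, ← Real.rpow_natCast (1 + ‖t‖) 2,
    ← Real.rpow_neg (by positivity), ← Real.rpow_mul (by positivity)]
  norm_num

lemma japanese_memℒp2 : MemLp (fun s : ℝ => ((1 + ‖s‖) ^ 2)⁻¹) 2 (volume : Measure ℝ) := by
  have hcont : Continuous fun s : ℝ => ((1 + ‖s‖) ^ 2)⁻¹ := by
    apply Continuous.inv₀ (by continuity)
    intro s; positivity
  rw [memLp_two_iff_integrable_sq hcont.aestronglyMeasurable]
  have hint : Integrable (fun t : ℝ => (1 + ‖t‖) ^ (-(4:ℝ))) volume :=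
    integrable_one_add_norm (by simp)
  exact hint.congr (by filter_upwards with t; rw [pow_neg_four_eq])

lemma schwartz_memℒp2 (g : SchwartzMap ℝ ℂ) : MemLp (⇑g) 2 (volume : Measure ℝ) := by
  rw [memLp_two_iff_integrable_sq_norm g.continuous.aestronglyMeasurable]
  obtain ⟨C, hC0, hC⟩ := schwartz_decay2 g
  have hint : Integrable (fun t : ℝ => C ^ 2 * (1 + ‖t‖) ^ (-(4:ℝ))) volume := by
    refine Integrable.const_mul (integrable_one_add_norm ?_) _
    simp
  refine hint.mono' (g.continuous.norm.pow 2).aestronglyMeasurable ?_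
  filter_upwards with t
  have h1 : ‖g t‖ ^ 2 ≤ (C * ((1 + ‖t‖) ^ 2)⁻¹) ^ 2 := by
    have := hC t
    nlinarith [norm_nonneg (g t)]
  rw [Real.norm_of_nonneg (by positivity), pow_neg_four_eq]
  calc ‖g t‖ ^ 2 ≤ (C * ((1 + ‖t‖) ^ 2)⁻¹) ^ 2 := h1
    _ = C ^ 2 * (((1 + ‖t‖) ^ 2)⁻¹) ^ 2 := by ring

lemma mul_L2_integrable {𝕜 : Type*} [RCLike 𝕜] {u v : ℝ → 𝕜} (hu : MemLp u 2 (volume : Measure ℝ))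
    (hv : MemLp v 2 (volume : Measure ℝ)) : Integrable (fun t => u t * v t) := by
  rw [← memLp_one_iff_integrable]
  have := hv.smul (φ := u) hu (r := 1)
    (hpqr := ⟨by rw [inv_one]; exact ENNReal.inv_two_add_inv_two⟩)
  exact this

/-- The short-time Fourier transform
`V(f,g)(x,ω) = ∫ f(t) conj(g(t-x)) e^{-2πiωt} dt`. -/
noncomputable def stft (f g : ℝ → ℂ) (x ω : ℝ) : ℂ :=
  ∫ t : ℝ, f t * (starRingEnd ℂ) (g (t - x)) *
    Complex.exp (-2 * Real.pi * Complex.I * ω * t)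

/-- For `f ∈ L²(ℝ)` and a Schwartz window `g`, the STFT is partially
differentiable in the time variable `x`, with `∂ₓ V(f,g) = V(f, -g')`. -/
theorem stft_hasDerivAt_time (f : ℝ → ℂ) (hf : MemLp f 2 (volume : Measure ℝ))
    (g : SchwartzMap ℝ ℂ) (x ω : ℝ) :
    HasDerivAt (fun x' : ℝ => stft f (⇑g) x' ω)
      (stft f (fun t : ℝ => -deriv (⇑g) t) x ω) x := by
  classical
  set e : ℝ → ℂ := fun t => Complex.exp (-2 * Real.pi * Complex.I * ω * t) with he_def
  have he_cont : Continuous e := by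
    apply Complex.continuous_exp.comp; continuity
  have he_norm : ∀ t : ℝ, ‖e t‖ = 1 := by
    intro t
    have : (-2 * (Real.pi : ℂ) * Complex.I * ω * t) = ((-2 * Real.pi * ω * t : ℝ) : ℂ) * Complex.I := by
      push_cast; ring
    simp only [he_def, this]
    exact Complex.norm_exp_ofReal_mul_I _
  have hgd : Differentiable ℝ (⇑g) := g.differentiable
  -- the translated window and its derivative are in L²
  have hgx : MemLp (fun t : ℝ => (starRingEnd ℂ) (g (t - x))) 2 (volume : Measure ℝ) := by
    have h1 : MemLp (fun t : ℝ => g (t - x)) 2 (volume : Measure ℝ) :=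
      (schwartz_memℒp2 g).comp_measurePreserving (measurePreserving_sub_right volume x)
    refine h1.of_le ?_ ?_
    · exact (Complex.continuous_conj.comp (g.continuous.comp (by continuity))).aestronglyMeasurable
    · filter_upwards with t; simp
  -- decay bound for the derivative
  obtain ⟨C, hC0, hC⟩ := schwartz_decay2 (SchwartzMap.derivCLM ℝ ℂ g)
  have hC' : ∀ s : ℝ, ‖deriv (⇑g) s‖ ≤ C * ((1 + ‖s‖) ^ 2)⁻¹ := by
    intro s; simpa [SchwartzMap.derivCLM_apply] using hC s
  set F : ℝ → ℝ → ℂ := fun x' t => f t * (starRingEnd ℂ) (g (t - x')) * e t with hF_def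
  set F' : ℝ → ℝ → ℂ := fun x' t => f t * (starRingEnd ℂ) (-(deriv (⇑g) (t - x'))) * e t
    with hF'_def
  set bound : ℝ → ℝ := fun t => ‖f t‖ * (4 * C * ((1 + ‖t - x‖) ^ 2)⁻¹) with hbound_def
  have hmeas : ∀ x' : ℝ, AEStronglyMeasurable (F x') (volume : Measure ℝ) := by
    intro x'
    exact ((hf.1.mul
      ((Complex.continuous_conj.comp (g.continuous.comp (by continuity))).aestronglyMeasurable)).mul
      he_cont.aestronglyMeasurable)
  have hF_int : Integrable (F x) (volume : Measure ℝ) := by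
    have h1 : Integrable (fun t => f t * (starRingEnd ℂ) (g (t - x))) volume :=
      mul_L2_integrable hf hgx
    exact (h1.bdd_mul (c := 1) he_cont.aestronglyMeasurable
      (by filter_upwards with t; rw [he_norm t])).congr
      (by filter_upwards with t; ring)
  have hF'_meas : AEStronglyMeasurable (F' x) (volume : Measure ℝ) := by
    have : Continuous fun t : ℝ => (starRingEnd ℂ) (-(deriv (⇑g) (t - x))) := by
      exact Complex.continuous_conj.comp
        (((SchwartzMap.derivCLM ℝ ℂ g).continuous.comp (by continuity)).neg)
    exact (hf.1.mul this.aestronglyMeasurable).mul he_cont.aestronglyMeasurable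
  have h_bound : ∀ᵐ t : ℝ ∂volume, ∀ x' ∈ Metric.ball x 1, ‖F' x' t‖ ≤ bound t := by
    filter_upwards with t
    intro x' hx'
    have hxx : |x' - x| < 1 := by
      simpa [Real.dist_eq] using hx'
    have key : ((1 + ‖t - x'‖) ^ 2)⁻¹ ≤ 4 * ((1 + ‖t - x‖) ^ 2)⁻¹ := by
      have h1 : ‖t - x‖ ≤ ‖t - x'‖ + 1 := by
        have heq : t - x = (t - x') + (x' - x) := by ring
        calc ‖t - x‖ = ‖(t - x') + (x' - x)‖ := by rw [← heq]
          _ ≤ ‖t - x'‖ + ‖x' - x‖ := norm_add_le _ _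
          _ ≤ ‖t - x'‖ + 1 := by
              have : ‖x' - x‖ ≤ 1 := by rw [Real.norm_eq_abs]; linarith
              linarith
      have h4 := inv_anti₀ (show (0:ℝ) < (1 + ‖t - x‖) ^ 2 / 4 by positivity)
        (show (1 + ‖t - x‖) ^ 2 / 4 ≤ (1 + ‖t - x'‖) ^ 2 by
          nlinarith [norm_nonneg (t - x'), norm_nonneg (t - x)])
      calc ((1 + ‖t - x'‖) ^ 2)⁻¹ ≤ ((1 + ‖t - x‖) ^ 2 / 4)⁻¹ := h4
        _ = 4 * ((1 + ‖t - x‖) ^ 2)⁻¹ := by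
            rw [div_eq_mul_inv, mul_inv]
            norm_num
            ring
    have hnorm : ‖F' x' t‖ = ‖f t‖ * ‖deriv (⇑g) (t - x')‖ := by
      simp only [hF'_def, norm_mul, he_norm, mul_one, map_neg, norm_neg]
      rw [RCLike.norm_conj]
    rw [hnorm, hbound_def]
    calc ‖f t‖ * ‖deriv (⇑g) (t - x')‖ ≤ ‖f t‖ * (C * ((1 + ‖t - x'‖) ^ 2)⁻¹) :=
          mul_le_mul_of_nonneg_left (hC' _) (norm_nonneg (f t))
      _ ≤ ‖f t‖ * (C * (4 * ((1 + ‖t - x‖) ^ 2)⁻¹)) :=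
          mul_le_mul_of_nonneg_left (mul_le_mul_of_nonneg_left key hC0) (norm_nonneg (f t))
      _ = ‖f t‖ * (4 * C * ((1 + ‖t - x‖) ^ 2)⁻¹) := by ring
  have hbound_int : Integrable bound (volume : Measure ℝ) := by
    have h1 : MemLp (fun t : ℝ => ((1 + ‖t - x‖) ^ 2)⁻¹) 2 (volume : Measure ℝ) :=
      japanese_memℒp2.comp_measurePreserving (measurePreserving_sub_right volume x)
    have h2 : Integrable (fun t : ℝ => ‖f t‖ * ((1 + ‖t - x‖) ^ 2)⁻¹) volume :=
      mul_L2_integrable (𝕜 := ℝ) hf.norm h1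
    exact ((h2.const_mul (4 * C)).congr (by filter_upwards with t; simp [hbound_def]; ring))
  have h_diff : ∀ᵐ t : ℝ ∂volume, ∀ x' ∈ Metric.ball x 1,
      HasDerivAt (fun y => F y t) (F' x' t) x' := by
    filter_upwards with t
    intro x' _
    have h1 : HasDerivAt (fun y : ℝ => t - y) (-1) x' := (hasDerivAt_id x').const_sub t
    have h2 : HasDerivAt (⇑g) (deriv (⇑g) (t - x')) (t - x') := (hgd (t - x')).hasDerivAt
    have h3 := h2.scomp x' h1
    have h4 := h3.star
    have h5 := (h4.const_mul (f t)).mul_const (e t)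
    convert h5 using 1
    · rfl
    · rfl
    simp only [hF'_def, Complex.star_def, map_neg, map_mul]
    ring_nf
    simp [Complex.star_def]
    ring
  have key := hasDerivAt_integral_of_dominated_loc_of_deriv_le (F := F) (F' := F') (μ := volume)
    (bound := bound) (Metric.ball_mem_nhds x one_pos) (Filter.Eventually.of_forall hmeas) hF_int hF'_meas h_bound
    hbound_int h_diff
  exact key.2
end

section
/- Let V = U + iW : ℝ² → ℂ be C³, with V(x₀,ω₀) = 0 and det J_V(x₀,ω₀) ≠ 0. Then the phase derivative along the horizontal path converges to a finite limit: lim_{x→x₀} (U·Wₓ - W·Uₓ)/(U² + W²) (x, ω₀) = (Uₓ·Wₓₓ - Wₓ·Uₓₓ)(x₀,ω₀) / (2(Uₓ² + Wₓ²)(x₀,ω₀)) ∈ ℝ. -/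
open Filter Topology

/-- Phase derivative of the STFT near a zero, horizontal path: if `V = U + iW` is
`C³`, `V(x₀,ω₀) = 0` and `det J_V(x₀,ω₀) ≠ 0`, then
`(U Wₓ - W Uₓ)/(U² + W²)(x, ω₀)` converges, as `x → x₀`, to the finite limit
`(Uₓ Wₓₓ - Wₓ Uₓₓ)(x₀,ω₀) / (2 (Uₓ² + Wₓ²)(x₀,ω₀))`. -/
theorem stft_phase_derivative_horizontal_limit (V : ℝ × ℝ → ℂ) (hV : ContDiff ℝ 3 V)
    (x₀ ω₀ : ℝ) (hzero : V (x₀, ω₀) = 0)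
    (U W : ℝ × ℝ → ℝ) (hU : U = fun p => (V p).re) (hW : W = fun p => (V p).im)
    (Ux Uω Wx Wω Uxx Wxx : ℝ × ℝ → ℝ)
    (hUx : Ux = fun p => fderiv ℝ U p (1, 0)) (hUω : Uω = fun p => fderiv ℝ U p (0, 1))
    (hWx : Wx = fun p => fderiv ℝ W p (1, 0)) (hWω : Wω = fun p => fderiv ℝ W p (0, 1))
    (hUxx : Uxx = fun p => fderiv ℝ Ux p (1, 0)) (hWxx : Wxx = fun p => fderiv ℝ Wx p (1, 0))
    (hdet : Ux (x₀, ω₀) * Wω (x₀, ω₀) - Uω (x₀, ω₀) * Wx (x₀, ω₀) ≠ 0) :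
    Tendsto
      (fun x : ℝ => (U (x, ω₀) * Wx (x, ω₀) - W (x, ω₀) * Ux (x, ω₀)) /
        (U (x, ω₀) ^ 2 + W (x, ω₀) ^ 2))
      (𝓝[≠] x₀)
      (𝓝 ((Ux (x₀, ω₀) * Wxx (x₀, ω₀) - Wx (x₀, ω₀) * Uxx (x₀, ω₀)) /
        (2 * (Ux (x₀, ω₀) ^ 2 + Wx (x₀, ω₀) ^ 2)))) := by
  -- smoothness
  have hUc : ContDiff ℝ 3 U := by
    rw [hU]; exact Complex.reCLM.contDiff.comp hV
  have hWc : ContDiff ℝ 3 W := by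
    rw [hW]; exact Complex.imCLM.contDiff.comp hV
  have hUxc : ContDiff ℝ 2 Ux := by
    rw [hUx]; exact (hUc.fderiv_right (by norm_num)).clm_apply contDiff_const
  have hWxc : ContDiff ℝ 2 Wx := by
    rw [hWx]; exact (hWc.fderiv_right (by norm_num)).clm_apply contDiff_const
  have hUxxc : ContDiff ℝ 1 Uxx := by
    rw [hUxx]; exact (hUxc.fderiv_right (by norm_num)).clm_apply contDiff_const
  have hWxxc : ContDiff ℝ 1 Wxx := by
    rw [hWxx]; exact (hWxc.fderiv_right (by norm_num)).clm_apply contDiff_const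
  -- derivative along the horizontal line
  have key : ∀ (G Gx : ℝ × ℝ → ℝ), Gx = (fun p => fderiv ℝ G p (1, 0)) →
      Differentiable ℝ G → ∀ x : ℝ, HasDerivAt (fun x => G (x, ω₀)) (Gx (x, ω₀)) x := by
    intro G Gx hGx hG x
    subst hGx
    exact (hG (x, ω₀)).hasFDerivAt.comp_hasDerivAt x
      ((hasDerivAt_id x).prodMk (hasDerivAt_const x ω₀))
  have hfU : ∀ x, HasDerivAt (fun x => U (x, ω₀)) (Ux (x, ω₀)) x :=
    key U Ux hUx (hUc.differentiable (by norm_num))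
  have hfW : ∀ x, HasDerivAt (fun x => W (x, ω₀)) (Wx (x, ω₀)) x :=
    key W Wx hWx (hWc.differentiable (by norm_num))
  have hfUx : ∀ x, HasDerivAt (fun x => Ux (x, ω₀)) (Uxx (x, ω₀)) x :=
    key Ux Uxx hUxx (hUxc.differentiable (by norm_num))
  have hfWx : ∀ x, HasDerivAt (fun x => Wx (x, ω₀)) (Wxx (x, ω₀)) x :=
    key Wx Wxx hWxx (hWxc.differentiable (by norm_num))
  -- values at the zero
  have hU0 : U (x₀, ω₀) = 0 := by rw [hU]; simp [hzero]
  have hW0 : W (x₀, ω₀) = 0 := by rw [hW]; simp [hzero]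
  -- nondegeneracy
  have hab : Ux (x₀, ω₀) ^ 2 + Wx (x₀, ω₀) ^ 2 ≠ 0 := by
    intro h
    have ha : Ux (x₀, ω₀) = 0 := by nlinarith [sq_nonneg (Ux (x₀, ω₀)), sq_nonneg (Wx (x₀, ω₀))]
    have hb : Wx (x₀, ω₀) = 0 := by nlinarith [sq_nonneg (Ux (x₀, ω₀)), sq_nonneg (Wx (x₀, ω₀))]
    exact hdet (by rw [ha, hb]; ring)
  have htwo : 2 * (Ux (x₀, ω₀) ^ 2 + Wx (x₀, ω₀) ^ 2) ≠ 0 := by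
    exact mul_ne_zero two_ne_zero hab
  -- slopes
  have hslopeU : Tendsto (fun x => U (x, ω₀) / (x - x₀)) (𝓝[≠] x₀) (𝓝 (Ux (x₀, ω₀))) := by
    have := hasDerivAt_iff_tendsto_slope.mp (hfU x₀)
    simpa [slope_fun_def_field, hU0] using this
  have hslopeW : Tendsto (fun x => W (x, ω₀) / (x - x₀)) (𝓝[≠] x₀) (𝓝 (Wx (x₀, ω₀))) := by
    have := hasDerivAt_iff_tendsto_slope.mp (hfW x₀)
    simpa [slope_fun_def_field, hW0] using this
  -- continuity along the line
  have lineCont : Continuous (fun x : ℝ => (x, ω₀)) := by continuity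
  have hcUx : Tendsto (fun x => Ux (x, ω₀)) (𝓝[≠] x₀) (𝓝 (Ux (x₀, ω₀))) :=
    ((hUxc.continuous.comp lineCont).tendsto x₀).mono_left nhdsWithin_le_nhds
  have hcWx : Tendsto (fun x => Wx (x, ω₀)) (𝓝[≠] x₀) (𝓝 (Wx (x₀, ω₀))) :=
    ((hWxc.continuous.comp lineCont).tendsto x₀).mono_left nhdsWithin_le_nhds
  have hcUxx : Tendsto (fun x => Uxx (x, ω₀)) (𝓝[≠] x₀) (𝓝 (Uxx (x₀, ω₀))) :=
    ((hUxxc.continuous.comp lineCont).tendsto x₀).mono_left nhdsWithin_le_nhds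
  have hcWxx : Tendsto (fun x => Wxx (x, ω₀)) (𝓝[≠] x₀) (𝓝 (Wxx (x₀, ω₀))) :=
    ((hWxxc.continuous.comp lineCont).tendsto x₀).mono_left nhdsWithin_le_nhds
  -- numerator and denominator with derivatives
  set N' : ℝ → ℝ := fun x => U (x, ω₀) * Wxx (x, ω₀) - W (x, ω₀) * Uxx (x, ω₀) with hN'
  set D' : ℝ → ℝ := fun x => 2 * (U (x, ω₀) * Ux (x, ω₀)) + 2 * (W (x, ω₀) * Wx (x, ω₀)) with hD'
  have hN : ∀ x, HasDerivAt
      (fun x => U (x, ω₀) * Wx (x, ω₀) - W (x, ω₀) * Ux (x, ω₀)) (N' x) x := by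
    intro x
    have h := ((hfU x).mul (hfWx x)).sub ((hfW x).mul (hfUx x))
    refine h.congr_deriv ?_
    simp only [hN']; ring
  have hD : ∀ x, HasDerivAt
      (fun x => U (x, ω₀) ^ 2 + W (x, ω₀) ^ 2) (D' x) x := by
    intro x
    have h := ((hfU x).pow 2).add ((hfW x).pow 2)
    refine h.congr_deriv ?_
    simp only [hD']; ring
  -- slope limits of N' and D'
  have hslopeN' : Tendsto (fun x => N' x / (x - x₀)) (𝓝[≠] x₀)
      (𝓝 (Ux (x₀, ω₀) * Wxx (x₀, ω₀) - Wx (x₀, ω₀) * Uxx (x₀, ω₀))) := by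
    have h := (hslopeU.mul hcWxx).sub (hslopeW.mul hcUxx)
    exact h.congr (fun x => by simp only [hN']; ring)
  have hslopeD' : Tendsto (fun x => D' x / (x - x₀)) (𝓝[≠] x₀)
      (𝓝 (2 * (Ux (x₀, ω₀) ^ 2 + Wx (x₀, ω₀) ^ 2))) := by
    have h2 : Tendsto (fun x => 2 * (U (x, ω₀) / (x - x₀) * Ux (x, ω₀)) +
        2 * (W (x, ω₀) / (x - x₀) * Wx (x, ω₀))) (𝓝[≠] x₀)
        (𝓝 (2 * (Ux (x₀, ω₀) * Ux (x₀, ω₀)) + 2 * (Wx (x₀, ω₀) * Wx (x₀, ω₀)))) :=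
      ((tendsto_const_nhds (x := (2:ℝ))).mul (hslopeU.mul hcUx)).add
        ((tendsto_const_nhds (x := (2:ℝ))).mul (hslopeW.mul hcWx))
    have h3 : Tendsto (fun x => D' x / (x - x₀)) (𝓝[≠] x₀)
        (𝓝 (2 * (Ux (x₀, ω₀) * Ux (x₀, ω₀)) + 2 * (Wx (x₀, ω₀) * Wx (x₀, ω₀)))) :=
      h2.congr (fun x => by simp only [hD']; ring)
    convert h3 using 2
    ring
  -- D' ≠ 0 near x₀
  have hD'ne : ∀ᶠ x in 𝓝[≠] x₀, D' x ≠ 0 := by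
    filter_upwards [hslopeD'.eventually_ne htwo] with x hx h0
    exact hx (by simp [h0])
  -- quotient of slopes
  have hquot : ∀ (p q c : ℝ), c ≠ 0 → p / c / (q / c) = p / q := by
    intro p q c hc
    rcases eq_or_ne q 0 with h | h
    · simp [h]
    · field_simp
  have hdiv : Tendsto (fun x => N' x / D' x) (𝓝[≠] x₀)
      (𝓝 ((Ux (x₀, ω₀) * Wxx (x₀, ω₀) - Wx (x₀, ω₀) * Uxx (x₀, ω₀)) /
        (2 * (Ux (x₀, ω₀) ^ 2 + Wx (x₀, ω₀) ^ 2)))) := by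
    have h := hslopeN'.div hslopeD' htwo
    refine h.congr' ?_
    filter_upwards [self_mem_nhdsWithin] with x hx
    exact hquot _ _ _ (sub_ne_zero.mpr hx)
  -- tendsto to zero
  have hcU : Tendsto (fun x => U (x, ω₀)) (𝓝[≠] x₀) (𝓝 (U (x₀, ω₀))) :=
    ((hUc.continuous.comp lineCont).tendsto x₀).mono_left nhdsWithin_le_nhds
  have hcW : Tendsto (fun x => W (x, ω₀)) (𝓝[≠] x₀) (𝓝 (W (x₀, ω₀))) :=
    ((hWc.continuous.comp lineCont).tendsto x₀).mono_left nhdsWithin_le_nhds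
  have hNz : Tendsto (fun x => U (x, ω₀) * Wx (x, ω₀) - W (x, ω₀) * Ux (x, ω₀))
      (𝓝[≠] x₀) (𝓝 0) := by
    simpa [hU0, hW0] using (hcU.mul hcWx).sub (hcW.mul hcUx)
  have hDz : Tendsto (fun x => U (x, ω₀) ^ 2 + W (x, ω₀) ^ 2) (𝓝[≠] x₀) (𝓝 0) := by
    simpa [hU0, hW0] using (hcU.pow 2).add (hcW.pow 2)
  exact HasDerivAt.lhopital_zero_nhdsNE
    (Filter.Eventually.of_forall hN) (Filter.Eventually.of_forall hD)
    hD'ne hNz hDz hdiv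
end
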